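/- Let α > 0, β ∈ (0,1), and G(t) = β·t/(ln(α/t))^{1/β−1} on (0, α). Then G₁(t) := ∫_t^α 1/(s·G'(s)) ds satisfies G₁(t) ≤ (ln(α/t))^{1/β} for all t ∈ (0, α), where G'(s) = (1 − β + β·ln(α/s))/(ln(α/s))^{1/β}. -/

import Mathlib

open Real Set intervalIntegral

theorem stmt11 (α β : ℝ) (hα : 0 < α) (hβ : β ∈ Set.Ioo (0 : ℝ) 1)
    (G' G₁ : ℝ → ℝ)
    (hG' : ∀ s ∈ Set.Ioo 0 α,
      G' s = (1 - β + β * Real.log (α / s)) / (Real.log (α / s)) ^ (1 / β))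
    (hG₁ : ∀ t ∈ Set.Ioo 0 α, G₁ t = ∫ s in t..α, 1 / (s * G' s)) :
    ∀ t ∈ Set.Ioo 0 α, G₁ t ≤ (Real.log (α / t)) ^ (1 / β) := by
  obtain ⟨hβ0, hβ1⟩ := hβ
  have h1β : (1 : ℝ) < 1 / β := (one_lt_div hβ0).mpr hβ1
  have hc0 : (0 : ℝ) < 1 / β := lt_trans one_pos h1β
  intro t ht
  obtain ⟨ht0, htα⟩ := ht
  set c := 1 / β with hc
  set f : ℝ → ℝ := fun s => (Real.log (α / s)) ^ c / (s * (1 - β + β * Real.log (α / s)))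
    with hf
  set g : ℝ → ℝ := fun s => (Real.log (α / s)) ^ (c - 1) / (β * s) with hg
  -- basic facts on Icc t α
  have hspos : ∀ s ∈ Set.Icc t α, 0 < s := fun s hs => lt_of_lt_of_le ht0 hs.1
  have hLnn : ∀ s ∈ Set.Icc t α, 0 ≤ Real.log (α / s) := by
    intro s hs
    apply Real.log_nonneg
    rw [le_div_iff₀ (hspos s hs)]
    simpa using hs.2
  have hDen : ∀ s ∈ Set.Icc t α, 0 < 1 - β + β * Real.log (α / s) := by
    intro s hs
    have := hLnn s hs
    nlinarith
  -- continuity of log (α / s)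
  have hlogc : ContinuousOn (fun s => Real.log (α / s)) (Set.Icc t α) := by
    apply ContinuousOn.log
    · exact continuousOn_const.div continuousOn_id fun s hs => (hspos s hs).ne'
    · intro s hs
      exact (div_pos hα (hspos s hs)).ne'
  have hfc : ContinuousOn f (Set.Icc t α) := by
    apply ContinuousOn.div
    · exact hlogc.rpow_const fun s hs => Or.inr hc0.le
    · exact (continuousOn_id.mul ((continuousOn_const.add
        (continuousOn_const.mul hlogc))))
    · intro s hs
      exact (mul_pos (hspos s hs) (hDen s hs)).ne'
  have hgc : ContinuousOn g (Set.Icc t α) := by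
    apply ContinuousOn.div
    · exact hlogc.rpow_const fun s hs => Or.inr (by linarith)
    · exact continuousOn_const.mul continuousOn_id
    · intro s hs
      exact (mul_pos hβ0 (hspos s hs)).ne'
  have huIcc : Set.uIcc t α = Set.Icc t α := Set.uIcc_of_le htα.le
  have hfint : IntervalIntegrable f MeasureTheory.volume t α :=
    (hfc.mono (by rw [huIcc])).intervalIntegrable
  have hgint : IntervalIntegrable g MeasureTheory.volume t α :=
    (hgc.mono (by rw [huIcc])).intervalIntegrable
  -- Step A: G₁ t equals ∫ f
  have hA : G₁ t = ∫ s in t..α, f s := by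
    rw [hG₁ t ⟨ht0, htα⟩]
    apply intervalIntegral.integral_congr_ae
    have hnull : ∀ᵐ s ∂MeasureTheory.volume, s ≠ α := by
      rw [MeasureTheory.ae_iff]
      simpa using MeasureTheory.measure_singleton (μ := MeasureTheory.volume) α
    filter_upwards [hnull] with s hsne hs
    rw [Set.uIoc_of_le htα.le] at hs
    have hs' : s ∈ Set.Ioo 0 α := ⟨lt_trans ht0 hs.1, lt_of_le_of_ne hs.2 hsne⟩
    have hs0 : (0 : ℝ) < s := hs'.1
    have hL : 0 < Real.log (α / s) := Real.log_pos ((one_lt_div hs0).mpr hs'.2)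
    have hLc : (0 : ℝ) < (Real.log (α / s)) ^ c := Real.rpow_pos_of_pos hL c
    have hD : (0 : ℝ) < 1 - β + β * Real.log (α / s) := by nlinarith
    rw [hG' s hs']
    simp only [hf]
    field_simp
  -- Step B: ∫ f ≤ ∫ g
  have hB : (∫ s in t..α, f s) ≤ ∫ s in t..α, g s := by
    apply intervalIntegral.integral_mono_on htα.le hfint hgint
    intro s hs
    have hs0 := hspos s hs
    have hL := hLnn s hs
    have hD := hDen s hs
    rcases eq_or_lt_of_le hL with hL0 | hLp
    · simp only [hf, hg, ← hL0]
      rw [Real.zero_rpow (by positivity), Real.zero_rpow (by linarith : c - 1 ≠ 0)]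
      simp
    · simp only [hf, hg]
      rw [div_le_div_iff₀ (by positivity) (by positivity)]
      have key : (Real.log (α / s)) ^ c
          = (Real.log (α / s)) ^ (c - 1) * Real.log (α / s) := by
        rw [← Real.rpow_add_one hLp.ne' (c - 1)]
        ring_nf
      rw [key]
      have hLc1 : (0 : ℝ) < (Real.log (α / s)) ^ (c - 1) := Real.rpow_pos_of_pos hLp _
      nlinarith [mul_pos hLc1 hs0]
  -- Step C: ∫ g = (log (α/t))^c
  have hC : (∫ s in t..α, g s) = (Real.log (α / t)) ^ c := by
    have hFTC : ∀ s ∈ Set.uIcc t α,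
        HasDerivAt (fun u => -((Real.log α - Real.log u) ^ c)) (g s) s := by
      intro s hs
      rw [huIcc] at hs
      have hs0 := hspos s hs
      have h1 : HasDerivAt (fun u => Real.log α - Real.log u) (-s⁻¹) s := by
        have h := (hasDerivAt_const s (Real.log α)).sub (Real.hasDerivAt_log hs0.ne')
        simp only [zero_sub] at h
        exact h
      have h2 : HasDerivAt (fun u : ℝ => u ^ c)
          (c * (Real.log α - Real.log s) ^ (c - 1)) (Real.log α - Real.log s) :=
        Real.hasDerivAt_rpow_const (Or.inr h1β.le)
      have h3 : HasDerivAt (fun u => -((Real.log α - Real.log u) ^ c))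
          (-(c * (Real.log α - Real.log s) ^ (c - 1) * -s⁻¹)) s := by
        have h := (h2.comp s h1).neg
        exact h
      have hls : Real.log (α / s) = Real.log α - Real.log s := Real.log_div hα.ne' hs0.ne'
      convert h3 using 1
      simp only [hg, hls, hc]
      field_simp
    rw [intervalIntegral.integral_eq_sub_of_hasDerivAt hFTC hgint]
    have hlt : Real.log (α / t) = Real.log α - Real.log t := Real.log_div hα.ne' ht0.ne'
    simp [Real.zero_rpow (by positivity : c ≠ 0), hlt]
  rw [hA]
  calc (∫ s in t..α, f s) ≤ ∫ s in t..α, g s := hB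
    _ = (Real.log (α / t)) ^ c := hC
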